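/- Let φ_λ : ℝ ⋉_{φ₁} ℝ² → SL(2,ℝ)³ be defined via the exponential of the Bianchi type III subalgebra spanned by e₁ = (𝐢,0,0), e₂ = ((1/2)(𝐣+𝐤),0,0), e₃ = (0, -((λ+7)/6)𝐣 + ((11-λ)/6)𝐤, -((λ+9)/6)𝐣 + ((9-λ)/6)𝐤). Then the one-parameter subgroup t ↦ exp(t·e₃) is periodic (nontrivial kernel, isomorphic to ℤ) if and only if the second and third components of e₃ are timelike, which happens exactly when λ = 2n²/(n²−m²) for some integers m > n > 0; otherwise the kernel is trivial. -/

import Mathlib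

open Matrix

abbrev M2 := Matrix (Fin 2) (Fin 2) ℝ

noncomputable def mj : M2 := !![0, 1; 1, 0]
noncomputable def mk : M2 := !![0, 1; -1, 0]

/-- Second component of e₃ in the Bianchi type III subalgebra. -/
noncomputable def e₃snd (l : ℝ) : M2 := (-(l + 7) / 6) • mj + ((11 - l) / 6) • mk
/-- Third component of e₃ in the Bianchi type III subalgebra. -/
noncomputable def e₃trd (l : ℝ) : M2 := (-(l + 9) / 6) • mj + ((9 - l) / 6) • mk

open Real

noncomputable def cm : ℂ →+* M2 where
  toFun z := !![z.re, z.im; -z.im, z.re]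
  map_one' := by simp [Matrix.one_fin_two]
  map_mul' z w := by
    ext i j
    fin_cases i <;> fin_cases j <;>
      simp [Matrix.mul_apply, Fin.sum_univ_succ, Complex.mul_re, Complex.mul_im] <;> ring
  map_zero' := by
    ext i j
    fin_cases i <;> fin_cases j <;> simp
  map_add' z w := by
    ext i j
    fin_cases i <;> fin_cases j <;> simp [Complex.add_re, Complex.add_im] <;> ring

lemma cm_apply (z : ℂ) : cm z = !![z.re, z.im; -z.im, z.re] := rfl

lemma cm_cont : Continuous cm := by
  show Continuous fun z : ℂ => !![z.re, z.im; -z.im, z.re]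
  refine continuous_matrix fun i j => ?_
  fin_cases i <;> fin_cases j <;> simp <;> fun_prop

lemma cm_eq_one {z : ℂ} : cm z = 1 ↔ z = 1 := by
  constructor
  · intro h
    have h1 : z.re = 1 := by
      have := congrFun (congrFun h 0) 0
      simpa [cm_apply, Matrix.one_apply] using this
    have h2 : z.im = 0 := by
      have := congrFun (congrFun h 0) 1
      simpa [cm_apply, Matrix.one_apply] using this
    exact Complex.ext (by simpa using h1) (by simpa using h2)
  · rintro rfl; exact map_one cm

lemma exp_smul_mk (θ : ℝ) :
    NormedSpace.exp (θ • _root_.mk) = 1 ↔ ∃ k : ℤ, θ = k * (2 * π) := by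
  have h1 : θ • _root_.mk = cm (θ * Complex.I) := by
    ext i j
    fin_cases i <;> fin_cases j <;> simp [cm_apply, _root_.mk]
  letI : SeminormedRing M2 := Matrix.linftyOpSemiNormedRing
  letI : NormedRing M2 := Matrix.linftyOpNormedRing
  letI : NormedAlgebra ℝ M2 := Matrix.linftyOpNormedAlgebra
  rw [h1]
  erw [← NormedSpace.map_exp cm cm_cont]
  rw [cm_eq_one,
    ← Complex.exp_eq_exp_ℂ,
    Complex.exp_eq_one_iff]
  constructor
  · rintro ⟨n, hn⟩
    refine ⟨n, ?_⟩
    have : (θ : ℂ) = ((n : ℝ) * (2 * π) : ℝ) := by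
      apply mul_right_cancel₀ Complex.I_ne_zero
      push_cast
      rw [hn]; ring
    exact_mod_cast this
  · rintro ⟨n, rfl⟩
    exact ⟨n, by push_cast; ring⟩

lemma exp_sq_zero (x : M2) (h : x * x = 0) : NormedSpace.exp x = 1 + x := by
  rw [NormedSpace.exp_eq_tsum ℝ]
  beta_reduce
  rw [tsum_eq_sum (s := {0, 1}) ?_]
  · norm_num [Finset.sum_insert, Finset.sum_singleton]
  · intro n hn
    simp only [Finset.mem_insert, Finset.mem_singleton] at hn
    have h2 : 2 ≤ n := by omega
    obtain ⟨k, rfl⟩ := Nat.exists_eq_add_of_le h2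
    rw [pow_add, pow_two, h, zero_mul, smul_zero]

lemma units_conj_eq_one_iff (u : M2ˣ) (X : M2) :
    (↑u * X * ↑u⁻¹ = 1) ↔ X = 1 := by
  rw [Units.mul_inv_eq_iff_eq_mul, one_mul]
  constructor
  · intro h
    have h2 := congrArg (fun y => (↑u⁻¹ : M2) * y) h
    simp only [← mul_assoc, Units.inv_mul, one_mul] at h2
    exact h2
  · rintro rfl; rw [mul_one]

lemma key (c T : ℝ) :
    NormedSpace.exp (T • !![0, c / 3; -3, 0]) = 1 ↔
      (T = 0 ∨ (0 < c ∧ ∃ k : ℤ, T * Real.sqrt c = k * (2 * π))) := by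
  rcases lt_trichotomy c 0 with hc | rfl | hc
  · -- hyperbolic
    set μ := Real.sqrt (-c) with hμdef
    have hμ : 0 < μ := Real.sqrt_pos.mpr (by linarith)
    have hμ2 : μ ^ 2 = -c := Real.sq_sqrt (by linarith)
    have hμ0 : μ ≠ 0 := ne_of_gt hμ
    have hmul1 : (!![μ, μ; -3, 3] : M2) * !![1/(2*μ), -(1/6); 1/(2*μ), 1/6] = 1 := by
      ext i j
      fin_cases i <;> fin_cases j <;>
        simp [Matrix.mul_apply, Fin.sum_univ_succ, Matrix.one_apply] <;> (try field_simp) <;> (try ring)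
    have hmul2 : (!![1/(2*μ), -(1/6); 1/(2*μ), 1/6] : M2) * !![μ, μ; -3, 3] = 1 := by
      ext i j
      fin_cases i <;> fin_cases j <;>
        simp [Matrix.mul_apply, Fin.sum_univ_succ, Matrix.one_apply] <;> (try field_simp) <;> (try ring)
    set u : M2ˣ := ⟨!![μ, μ; -3, 3], !![1/(2*μ), -(1/6); 1/(2*μ), 1/6], hmul1, hmul2⟩ with hu
    have hD : Matrix.diagonal ![T * μ, -(T * μ)] = (!![T*μ, 0; 0, -(T*μ)] : M2) := by
      ext i j
      fin_cases i <;> fin_cases j <;> simp [Matrix.diagonal_apply]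
    have hconj : T • (!![0, c / 3; -3, 0] : M2) =
        (↑u : M2) * (Matrix.diagonal ![T * μ, -(T * μ)]) * (↑u⁻¹ : M2) := by
      rw [hD]
      show _ = (!![μ, μ; -3, 3] : M2) * _ * !![1/(2*μ), -(1/6); 1/(2*μ), 1/6]
      ext i j
      fin_cases i <;> fin_cases j <;>
        simp [Matrix.mul_apply, Fin.sum_univ_succ] <;> (try field_simp) <;> (try ring) <;>
          (try linear_combination (36*T)*hμ2) <;> (try linear_combination (6*T)*hμ2)
    rw [hconj, Matrix.exp_units_conj, units_conj_eq_one_iff, Matrix.exp_diagonal]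
    constructor
    · intro hexp
      left
      have h00 := congrFun (congrFun hexp 0) 0
      simp [Matrix.diagonal_apply, Matrix.one_apply, ← Real.exp_eq_exp_ℝ] at h00
      rcases h00 with h | h
      · exact h
      · exact absurd h hμ0
    · rintro (rfl | ⟨hc', -⟩)
      · ext i j
        fin_cases i <;> fin_cases j <;>
          simp [Matrix.diagonal_apply, Matrix.one_apply, ← Real.exp_eq_exp_ℝ]
      · linarith
  · -- c = 0
    have hsq : (T • (!![0, (0:ℝ) / 3; -3, 0] : M2)) * (T • !![0, (0:ℝ) / 3; -3, 0]) = 0 := by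
      ext i j
      fin_cases i <;> fin_cases j <;>
        simp [Matrix.mul_apply, Fin.sum_univ_succ]
    rw [exp_sq_zero _ hsq]
    constructor
    · intro h
      left
      have h10 := congrFun (congrFun h 1) 0
      simp [Matrix.one_apply] at h10
      linarith
    · rintro (rfl | ⟨hc', -⟩)
      · simp
      · exact absurd hc' (lt_irrefl 0)
  · -- timelike
    set ω := Real.sqrt c with hωdef
    have hω : 0 < ω := Real.sqrt_pos.mpr hc
    have hω2 : ω ^ 2 = c := Real.sq_sqrt hc.le
    have hω0 : ω ≠ 0 := ne_of_gt hω
    have hmul1 : (!![ω/3, 0; 0, 1] : M2) * !![3/ω, 0; 0, 1] = 1 := by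
      ext i j
      fin_cases i <;> fin_cases j <;>
        simp [Matrix.mul_apply, Fin.sum_univ_succ, Matrix.one_apply] <;> (try field_simp)
    have hmul2 : (!![3/ω, 0; 0, 1] : M2) * !![ω/3, 0; 0, 1] = 1 := by
      ext i j
      fin_cases i <;> fin_cases j <;>
        simp [Matrix.mul_apply, Fin.sum_univ_succ, Matrix.one_apply] <;> (try field_simp) <;> (try exact hω0)
    set u : M2ˣ := ⟨!![ω/3, 0; 0, 1], !![3/ω, 0; 0, 1], hmul1, hmul2⟩ with hu
    have hconj : T • (!![0, c / 3; -3, 0] : M2) = (↑u : M2) * ((T * ω) • _root_.mk) * (↑u⁻¹ : M2) := by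
      show _ = (!![ω/3, 0; 0, 1] : M2) * _ * !![3/ω, 0; 0, 1]
      ext i j
      fin_cases i <;> fin_cases j <;>
        simp [Matrix.mul_apply, Fin.sum_univ_succ, _root_.mk] <;> (try field_simp) <;> (try ring) <;>
          (try linear_combination (-T)*hω2)
    rw [hconj, Matrix.exp_units_conj, units_conj_eq_one_iff, exp_smul_mk]
    constructor
    · rintro ⟨k, hk⟩
      exact Or.inr ⟨hc, k, hk⟩
    · rintro (rfl | ⟨-, k, hk⟩)
      · exact ⟨0, by norm_num⟩
      · exact ⟨k, hk⟩

lemma e₃snd_eq (l : ℝ) : e₃snd l = !![0, (2 - l) / 3; -3, 0] := by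
  ext i j
  fin_cases i <;> fin_cases j <;>
    simp [e₃snd, mj, _root_.mk, Matrix.add_apply, Matrix.smul_apply, smul_eq_mul] <;> ring

lemma e₃trd_eq (l : ℝ) : e₃trd l = !![0, -l / 3; -3, 0] := by
  ext i j
  fin_cases i <;> fin_cases j <;>
    simp [e₃trd, mj, _root_.mk, Matrix.add_apply, Matrix.smul_apply, smul_eq_mul] <;> ring

theorem stmt_19 (l : ℝ) :
    -- the one-parameter subgroup t ↦ exp(t·e₃) of SL(2,ℝ)³ (whose first
    -- component is trivial) is periodic, i.e. has nontrivial kernel,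
    ((∃ T : ℝ, T ≠ 0 ∧ NormedSpace.exp (T • e₃snd l) = 1 ∧
        NormedSpace.exp (T • e₃trd l) = 1) ↔
      -- iff the second and third components of e₃ are timelike with
      -- commensurable periods, which happens exactly when
      -- λ = 2n²/(n²−m²) for some integers m > n > 0;
      (∃ m n : ℤ, m > n ∧ n > 0 ∧ l = 2 * (n : ℝ) ^ 2 / ((n : ℝ) ^ 2 - (m : ℝ) ^ 2))) := by
  simp only [e₃snd_eq, e₃trd_eq, key]
  constructor
  · rintro ⟨T, hT0, hsnd', htrd'⟩
    rcases hsnd' with rfl | ⟨hl2, a, ha⟩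
    · exact absurd rfl hT0
    rcases htrd' with rfl | ⟨hl0, b, hb⟩
    · exact absurd rfl hT0
    have hπ : (0:ℝ) < π := Real.pi_pos
    have hsq2 : 0 < Real.sqrt (2 - l) := Real.sqrt_pos.mpr hl2
    have hsq0 : 0 < Real.sqrt (-l) := Real.sqrt_pos.mpr hl0
    have hb0 : b ≠ 0 := by
      rintro rfl
      rw [Int.cast_zero, zero_mul] at hb
      rcases mul_eq_zero.mp hb with h | h
      · exact hT0 h
      · exact absurd h (ne_of_gt hsq0)
    have ha2 : T ^ 2 * (2 - l) = (a : ℝ) ^ 2 * (2 * π) ^ 2 := by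
      have h := congrArg (fun x => x ^ 2) ha
      simp only [mul_pow] at h
      rw [Real.sq_sqrt hl2.le] at h
      linear_combination h
    have hb2 : T ^ 2 * (-l) = (b : ℝ) ^ 2 * (2 * π) ^ 2 := by
      have h := congrArg (fun x => x ^ 2) hb
      simp only [mul_pow] at h
      rw [Real.sq_sqrt hl0.le] at h
      linear_combination h
    have hT2 : T ^ 2 ≠ 0 := pow_ne_zero 2 hT0
    have E : (2 - l) * (b : ℝ) ^ 2 = (-l) * (a : ℝ) ^ 2 := by
      have h4 : T ^ 2 * ((2 - l) * (b : ℝ) ^ 2) = T ^ 2 * ((-l) * (a : ℝ) ^ 2) := by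
        linear_combination ((b : ℝ) ^ 2) * ha2 - ((a : ℝ) ^ 2) * hb2
      exact mul_left_cancel₀ hT2 h4
    have hbR : ((b : ℝ)) ≠ 0 := Int.cast_ne_zero.mpr hb0
    have hbsq : (0:ℝ) < (b : ℝ) ^ 2 := lt_of_le_of_ne (sq_nonneg _) (Ne.symm (pow_ne_zero 2 hbR))
    have hasq : (b : ℝ) ^ 2 < (a : ℝ) ^ 2 := by nlinarith
    have habZ : b ^ 2 < a ^ 2 := by exact_mod_cast hasq
    refine ⟨|a|, |b|, ?_, abs_pos.mpr hb0, ?_⟩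
    · by_contra h
      push_neg at h
      have h2 := pow_le_pow_left₀ (abs_nonneg a) h 2
      rw [sq_abs, sq_abs] at h2
      omega
    · have hden : ((|b| : ℤ) : ℝ) ^ 2 - ((|a| : ℤ) : ℝ) ^ 2 ≠ 0 := by
        rw [Int.cast_abs, Int.cast_abs, sq_abs, sq_abs]
        nlinarith
      rw [eq_div_iff hden, Int.cast_abs, Int.cast_abs, sq_abs, sq_abs]
      linear_combination (-1 : ℝ) * E
  · rintro ⟨m, n, hmn, hn, rfl⟩
    have hπ : (0:ℝ) < π := Real.pi_pos
    have hN : (0:ℝ) < (n : ℝ) := by exact_mod_cast hn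
    have hM : ((n : ℝ)) < (m : ℝ) := by exact_mod_cast hmn
    have hD : (0:ℝ) < (m : ℝ) ^ 2 - (n : ℝ) ^ 2 := by nlinarith
    have hden : ((n : ℝ)) ^ 2 - (m : ℝ) ^ 2 ≠ 0 := by nlinarith
    have hden2 : ((m : ℝ)) ^ 2 - (n : ℝ) ^ 2 ≠ 0 := ne_of_gt hD
    have hc2 : 2 - 2 * (n : ℝ) ^ 2 / ((n : ℝ) ^ 2 - (m : ℝ) ^ 2)
        = 2 * (m : ℝ) ^ 2 / ((m : ℝ) ^ 2 - (n : ℝ) ^ 2) := by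
      field_simp
      ring
    have hc0 : -(2 * (n : ℝ) ^ 2 / ((n : ℝ) ^ 2 - (m : ℝ) ^ 2))
        = 2 * (n : ℝ) ^ 2 / ((m : ℝ) ^ 2 - (n : ℝ) ^ 2) := by
      field_simp
      ring
    refine ⟨2 * π * Real.sqrt (((m : ℝ) ^ 2 - (n : ℝ) ^ 2) / 2), ?_, Or.inr ⟨?_, m, ?_⟩,
      Or.inr ⟨?_, n, ?_⟩⟩
    · exact ne_of_gt (mul_pos (by positivity) (Real.sqrt_pos.mpr (by linarith)))
    · rw [hc2]
      exact div_pos (by nlinarith) (by nlinarith)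
    · rw [hc2, mul_assoc, ← Real.sqrt_mul (by linarith : (0:ℝ) ≤ ((m : ℝ) ^ 2 - (n : ℝ) ^ 2) / 2)]
      have harg : (((m : ℝ) ^ 2 - (n : ℝ) ^ 2) / 2) * (2 * (m : ℝ) ^ 2 / ((m : ℝ) ^ 2 - (n : ℝ) ^ 2))
          = (m : ℝ) ^ 2 := by
        field_simp
      rw [harg, Real.sqrt_sq (by linarith : (0:ℝ) ≤ (m : ℝ))]
      ring
    · rw [hc0]
      exact div_pos (by nlinarith) (by nlinarith)
    · rw [hc0, mul_assoc, ← Real.sqrt_mul (by linarith : (0:ℝ) ≤ ((m : ℝ) ^ 2 - (n : ℝ) ^ 2) / 2)]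
      have harg : (((m : ℝ) ^ 2 - (n : ℝ) ^ 2) / 2) * (2 * (n : ℝ) ^ 2 / ((m : ℝ) ^ 2 - (n : ℝ) ^ 2))
          = (n : ℝ) ^ 2 := by
        field_simp
      rw [harg, Real.sqrt_sq (by linarith : (0:ℝ) ≤ (n : ℝ))]
      ring
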